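/- Let q ≥ 2 and n ≥ 2 be integers. Then (q^n−1)/Φ_n(q) = lcm{ q^d−1 : d a positive divisor of n with d < n }, where Φ_n is the n-th cyclotomic polynomial evaluated at q; in particular Φ_n(q) divides q^n−1. -/

import Mathlib

/-- `(q^b - 1) % (q^a - 1) = q^(b % a) - 1` for `q ≥ 2`, `a ≥ 1`. -/
lemma aux_pow_sub_one_mod (q a b : ℕ) (hq : 2 ≤ q) (ha : 0 < a) :
    (q ^ b - 1) % (q ^ a - 1) = q ^ (b % a) - 1 := by
  conv_lhs => rw [← Nat.div_add_mod b a]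
  set k := b / a
  set r := b % a
  have hX : 1 ≤ q ^ (a * k) := Nat.one_le_pow _ _ (by omega)
  have hY : 1 ≤ q ^ r := Nat.one_le_pow _ _ (by omega)
  have hdvd : q ^ a - 1 ∣ q ^ (a * k) - 1 := by
    simpa only [one_pow, pow_mul] using Nat.sub_dvd_pow_sub_pow (q ^ a) 1 k
  obtain ⟨t, ht⟩ := hdvd
  have hkey : q ^ (a * k + r) - 1 = q ^ r - 1 + (q ^ a - 1) * (t * q ^ r) := by
    have h1 : q ^ (a * k + r) = q ^ (a * k) * q ^ r := by rw [pow_add]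
    have h2 : (q ^ a - 1) * (t * q ^ r) = (q ^ (a * k) - 1) * q ^ r := by
      rw [ht]; ring
    have h3 : (q ^ (a * k) - 1) * q ^ r = q ^ (a * k) * q ^ r - q ^ r := by
      rw [Nat.sub_mul, one_mul]
    have h4 : q ^ r ≤ q ^ (a * k) * q ^ r := Nat.le_mul_of_pos_left _ (by omega)
    omega
  rw [hkey, Nat.add_mul_mod_self_left]
  have hrlt : r < a := Nat.mod_lt _ ha
  have : q ^ r < q ^ a := Nat.pow_lt_pow_right (by omega) hrlt
  have h1a : 1 ≤ q ^ a := Nat.one_le_pow _ _ (by omega)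
  exact Nat.mod_eq_of_lt (by omega)

/-- `gcd (q^a - 1) (q^b - 1) = q^(gcd a b) - 1` for `q ≥ 2`. -/
lemma aux_gcd_pow_sub_one (q : ℕ) (hq : 2 ≤ q) : ∀ a b : ℕ,
    Nat.gcd (q ^ a - 1) (q ^ b - 1) = q ^ Nat.gcd a b - 1 := by
  intro a
  induction a using Nat.strong_induction_on with
  | _ a ih =>
    intro b
    rcases Nat.eq_zero_or_pos a with rfl | ha
    · simp
    · have h1a : 1 ≤ q ^ a := Nat.one_le_pow _ _ (by omega)
      have h1 : 0 < q ^ a - 1 := by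
        have : q ^ 1 ≤ q ^ a := Nat.pow_le_pow_right (by omega) ha
        simp only [pow_one] at this; omega
      rw [Nat.gcd_rec, aux_pow_sub_one_mod q a b hq ha,
        ih (b % a) (Nat.mod_lt _ ha) a, ← Nat.gcd_rec]

/-- Distributivity of gcd over lcm in ℕ. -/
lemma aux_gcd_lcm_distrib (a b c : ℕ) :
    Nat.gcd a (Nat.lcm b c) = Nat.lcm (Nat.gcd a b) (Nat.gcd a c) := by
  rcases Nat.eq_zero_or_pos a with rfl | ha
  · simp
  rcases Nat.eq_zero_or_pos b with rfl | hb
  · simp only [Nat.lcm_zero_left, Nat.gcd_zero_right]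
    exact (Nat.dvd_antisymm (Nat.dvd_lcm_left _ _)
      (Nat.lcm_dvd dvd_rfl (Nat.gcd_dvd_left a c)))
  rcases Nat.eq_zero_or_pos c with rfl | hc
  · simp only [Nat.lcm_zero_right, Nat.gcd_zero_right]
    exact (Nat.dvd_antisymm (Nat.dvd_lcm_right _ _)
      (Nat.lcm_dvd (Nat.gcd_dvd_left a b) dvd_rfl))
  have hbc : Nat.lcm b c ≠ 0 := Nat.lcm_ne_zero (by omega) (by omega)
  have hab : Nat.gcd a b ≠ 0 := Nat.gcd_ne_zero_left (by omega)
  have hac : Nat.gcd a c ≠ 0 := Nat.gcd_ne_zero_left (by omega)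
  have hL : Nat.gcd a (Nat.lcm b c) ≠ 0 := Nat.gcd_ne_zero_left (by omega)
  have hR : Nat.lcm (Nat.gcd a b) (Nat.gcd a c) ≠ 0 := Nat.lcm_ne_zero hab hac
  refine Nat.dvd_antisymm ?_ ?_
  · rw [← Nat.factorization_le_iff_dvd hL hR]
    intro p
    have e1 := Nat.factorization_gcd (a := a) (b := Nat.lcm b c) (by omega) hbc
    have e2 := Nat.factorization_lcm (a := b) (b := c) (by omega) (by omega)
    have e3 := Nat.factorization_lcm (a := Nat.gcd a b) (b := Nat.gcd a c) hab hac
    have e4 := Nat.factorization_gcd (a := a) (b := b) (by omega) (by omega)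
    have e5 := Nat.factorization_gcd (a := a) (b := c) (by omega) (by omega)
    rw [e1, e2, e3, e4, e5]
    simp only [Finsupp.inf_apply, Finsupp.sup_apply]
    omega
  · exact Nat.lcm_dvd (Nat.dvd_gcd (Nat.gcd_dvd_left _ _)
      ((Nat.gcd_dvd_right a b).trans (Nat.dvd_lcm_left _ _)))
      (Nat.dvd_gcd (Nat.gcd_dvd_left _ _)
      ((Nat.gcd_dvd_right a c).trans (Nat.dvd_lcm_right _ _)))

lemma aux_gcd_finset_lcm_distrib (b : ℕ) (s : Finset ℕ) (f : ℕ → ℕ) :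
    Nat.gcd b (s.lcm f) = s.lcm fun i => Nat.gcd b (f i) := by
  induction s using Finset.induction_on with
  | empty => simp
  | insert _ _ h ih =>
    rw [Finset.lcm_insert, Finset.lcm_insert, lcm_eq_nat_lcm, lcm_eq_nat_lcm,
      aux_gcd_lcm_distrib, ih]


/-- For a divisor-closed finite set of positive naturals, the lcm of `q^d - 1`
equals the product of the cyclotomic values. -/
lemma aux_lcm_eq_prod (q : ℕ) (hq : 2 ≤ q) (D : Finset ℕ)
    (hpos : ∀ d ∈ D, 0 < d) (hdc : ∀ d ∈ D, ∀ e, e ∣ d → e ∈ D) :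
    (D.lcm fun d => q ^ d - 1) =
      ∏ d ∈ D, ((Polynomial.cyclotomic d ℤ).eval (q : ℤ)).toNat := by
  have hq1 : (1 : ℤ) < (q : ℤ) := by exact_mod_cast hq.trans_lt' one_lt_two
  have hc_pos : ∀ d : ℕ, 0 < ((Polynomial.cyclotomic d ℤ).eval (q : ℤ)).toNat := by
    intro d
    have h := Polynomial.cyclotomic_pos' d hq1
    have h2 := Int.toNat_of_nonneg h.le
    omega
  have hprod : ∀ m : ℕ, 0 < m →
      (∏ d ∈ m.divisors, ((Polynomial.cyclotomic d ℤ).eval (q : ℤ)).toNat) = q ^ m - 1 := by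
    intro m hm
    have hz : (∏ d ∈ m.divisors, (((Polynomial.cyclotomic d ℤ).eval (q : ℤ)).toNat : ℤ))
        = (q : ℤ) ^ m - 1 := by
      have := Polynomial.prod_cyclotomic_eq_X_pow_sub_one hm ℤ
      calc (∏ d ∈ m.divisors, (((Polynomial.cyclotomic d ℤ).eval (q : ℤ)).toNat : ℤ))
          = ∏ d ∈ m.divisors, (Polynomial.cyclotomic d ℤ).eval (q : ℤ) := by
            refine Finset.prod_congr rfl fun d _ => ?_
            exact Int.toNat_of_nonneg (Polynomial.cyclotomic_pos' d hq1).le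
        _ = (∏ d ∈ m.divisors, Polynomial.cyclotomic d ℤ).eval (q : ℤ) := by
            rw [Polynomial.eval_prod]
        _ = (q : ℤ) ^ m - 1 := by rw [this]; simp
    have h1 : 1 ≤ q ^ m := Nat.one_le_pow _ _ (by omega)
    have : ((∏ d ∈ m.divisors, ((Polynomial.cyclotomic d ℤ).eval (q : ℤ)).toNat : ℕ) : ℤ)
        = ((q ^ m - 1 : ℕ) : ℤ) := by
      push_cast [Nat.cast_sub h1] at hz ⊢
      convert hz using 2
    exact_mod_cast this
  induction D using Finset.strongInduction with
  | _ D ih =>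
    rcases Finset.eq_empty_or_nonempty D with rfl | hne
    · simp
    · set m := D.max' hne with hm_def
      have hm_mem : m ∈ D := D.max'_mem hne
      have hm_pos : 0 < m := hpos m hm_mem
      have herase_ss : D.erase m ⊂ D := Finset.erase_ssubset hm_mem
      have hmax : ∀ d ∈ D, d ≤ m := fun d hd => D.le_max' d hd
      have hdc' : ∀ d ∈ D.erase m, ∀ e, e ∣ d → e ∈ D.erase m := by
        intro d hd e he
        have hdD := Finset.mem_of_mem_erase hd
        have heD := hdc d hdD e he
        refine Finset.mem_erase.mpr ⟨?_, heD⟩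
        rintro rfl
        have h1 := Nat.le_of_dvd (hpos d hdD) he
        have h2 := hmax d hdD
        have : d = m := le_antisymm h2 h1
        exact (Finset.mem_erase.mp hd).1 this
      have hsub : m.properDivisors ⊆ D.erase m := by
        intro e he
        rw [Nat.mem_properDivisors] at he
        exact Finset.mem_erase.mpr ⟨he.2.ne, hdc m hm_mem e he.1⟩
      -- the gcd computation
      have hgcd : Nat.gcd (q ^ m - 1) ((D.erase m).lcm fun d => q ^ d - 1)
          = m.properDivisors.lcm fun d => q ^ d - 1 := by
        rw [aux_gcd_finset_lcm_distrib]
        refine Nat.dvd_antisymm ?_ ?_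
        · refine Finset.lcm_dvd fun d hd => ?_
          rw [aux_gcd_pow_sub_one q hq]
          have hmem : Nat.gcd m d ∈ m.properDivisors := by
            rw [Nat.mem_properDivisors]
            refine ⟨Nat.gcd_dvd_left _ _, ?_⟩
            rcases lt_or_eq_of_le (Nat.le_of_dvd hm_pos (Nat.gcd_dvd_left m d)) with h | h
            · exact h
            · exfalso
              have hmd : m ∣ d := h ▸ Nat.gcd_dvd_right m d
              have hdD := Finset.mem_of_mem_erase hd
              have : d = m := le_antisymm (hmax d hdD)
                (Nat.le_of_dvd (hpos d hdD) hmd)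
              exact (Finset.mem_erase.mp hd).1 this
          exact Finset.dvd_lcm hmem
        · refine Finset.lcm_dvd fun e he => ?_
          have heD : e ∈ D.erase m := hsub he
          have : Nat.gcd (q ^ m - 1) (q ^ e - 1) = q ^ e - 1 := by
            rw [aux_gcd_pow_sub_one q hq,
              Nat.gcd_eq_right (Nat.mem_properDivisors.mp he).1]
          exact this ▸ Finset.dvd_lcm heD
      have hproper_ss : m.properDivisors ⊂ D :=
        ssubset_of_subset_of_ssubset hsub herase_ss
      have ih_proper := ih m.properDivisors hproper_ss
        (fun d hd => Nat.pos_of_mem_properDivisors hd)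
        (fun d hd e he => Nat.mem_properDivisors.mpr
          ⟨he.trans (Nat.mem_properDivisors.mp hd).1,
           lt_of_le_of_lt (Nat.le_of_dvd (Nat.pos_of_mem_properDivisors hd) he)
             (Nat.mem_properDivisors.mp hd).2⟩)
      have ih_erase := ih (D.erase m) herase_ss
        (fun d hd => hpos d (Finset.mem_of_mem_erase hd)) hdc'
      -- split q^m - 1 as product over divisors
      have hsplit : q ^ m - 1
          = ((Polynomial.cyclotomic m ℤ).eval (q : ℤ)).toNat
            * ∏ d ∈ m.properDivisors, ((Polynomial.cyclotomic d ℤ).eval (q : ℤ)).toNat := by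
        rw [← hprod m hm_pos, ← Nat.cons_self_properDivisors hm_pos.ne',
          Finset.prod_cons]
      set c : ℕ → ℕ := fun d => ((Polynomial.cyclotomic d ℤ).eval (q : ℤ)).toNat with hc
      have hP_pos : 0 < ∏ d ∈ m.properDivisors, c d :=
        Finset.prod_pos fun d _ => hc_pos d
      have hmain : (D.lcm fun d => q ^ d - 1) * ∏ d ∈ m.properDivisors, c d
          = (c m * ∏ d ∈ D.erase m, c d) * ∏ d ∈ m.properDivisors, c d := by
        rw [← Finset.insert_erase hm_mem, Finset.lcm_insert, lcm_eq_nat_lcm]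
        rw [Finset.insert_erase hm_mem]
        calc Nat.lcm (q ^ m - 1) ((D.erase m).lcm fun d => q ^ d - 1)
              * ∏ d ∈ m.properDivisors, c d
            = Nat.lcm (q ^ m - 1) ((D.erase m).lcm fun d => q ^ d - 1)
              * Nat.gcd (q ^ m - 1) ((D.erase m).lcm fun d => q ^ d - 1) := by
              rw [hgcd, ih_proper]
          _ = (q ^ m - 1) * ((D.erase m).lcm fun d => q ^ d - 1) := by
              rw [mul_comm (Nat.lcm _ _), Nat.gcd_mul_lcm]
          _ = (c m * ∏ d ∈ m.properDivisors, c d) * ∏ d ∈ D.erase m, c d := by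
              rw [hsplit, ih_erase]
          _ = (c m * ∏ d ∈ D.erase m, c d) * ∏ d ∈ m.properDivisors, c d := by ring
      have hfin : (D.lcm fun d => q ^ d - 1) = c m * ∏ d ∈ D.erase m, c d :=
        Nat.eq_of_mul_eq_mul_right hP_pos hmain
      rw [hfin, ← Finset.prod_erase_mul D c hm_mem, mul_comm]

theorem pow_sub_one_div_cyclotomic_eval_eq_lcm (q n : ℕ) (hq : 2 ≤ q) (hn : 2 ≤ n) :
    ((Polynomial.cyclotomic n ℤ).eval (q : ℤ)).toNat ∣ q ^ n - 1 ∧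
      (q ^ n - 1) / ((Polynomial.cyclotomic n ℤ).eval (q : ℤ)).toNat =
        n.properDivisors.lcm fun d => q ^ d - 1 := by
  have hq1 : (1 : ℤ) < (q : ℤ) := by exact_mod_cast hq.trans_lt' one_lt_two
  have hn0 : 0 < n := by omega
  have hpd_pos : ∀ d ∈ n.properDivisors, 0 < d := fun d hd => Nat.pos_of_mem_properDivisors hd
  have hdc : ∀ d ∈ n.properDivisors, ∀ e, e ∣ d → e ∈ n.properDivisors := by
    intro d hd e he
    rw [Nat.mem_properDivisors] at hd ⊢
    exact ⟨he.trans hd.1, lt_of_le_of_lt (Nat.le_of_dvd (Nat.pos_of_mem_properDivisors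
      (Nat.mem_properDivisors.mpr hd)) he) hd.2⟩
  have hkey := aux_lcm_eq_prod q hq n.properDivisors hpd_pos hdc
  set c : ℕ → ℕ := fun d => ((Polynomial.cyclotomic d ℤ).eval (q : ℤ)).toNat with hc
  have hc_pos : ∀ d : ℕ, 0 < c d := by
    intro d
    have h := Polynomial.cyclotomic_pos' d hq1
    have h2 := Int.toNat_of_nonneg h.le
    simp only [hc]
    omega
  have hprodn : q ^ n - 1 = c n * ∏ d ∈ n.properDivisors, c d := by
    have hz : (∏ d ∈ n.divisors, (c d : ℤ)) = (q : ℤ) ^ n - 1 := by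
      have := Polynomial.prod_cyclotomic_eq_X_pow_sub_one hn0 ℤ
      calc (∏ d ∈ n.divisors, (c d : ℤ))
          = ∏ d ∈ n.divisors, (Polynomial.cyclotomic d ℤ).eval (q : ℤ) := by
            refine Finset.prod_congr rfl fun d _ => ?_
            exact Int.toNat_of_nonneg (Polynomial.cyclotomic_pos' d hq1).le
        _ = (∏ d ∈ n.divisors, Polynomial.cyclotomic d ℤ).eval (q : ℤ) := by
            rw [Polynomial.eval_prod]
        _ = (q : ℤ) ^ n - 1 := by rw [this]; simp
    have h1 : 1 ≤ q ^ n := Nat.one_le_pow _ _ (by omega)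
    have hzz : ((q ^ n - 1 : ℕ) : ℤ) = ((∏ d ∈ n.divisors, c d : ℕ) : ℤ) := by
      push_cast [Nat.cast_sub h1]
      rw [hz]
    have h2 : q ^ n - 1 = ∏ d ∈ n.divisors, c d := by exact_mod_cast hzz
    rw [h2, ← Nat.cons_self_properDivisors hn0.ne', Finset.prod_cons]
  constructor
  · exact ⟨∏ d ∈ n.properDivisors, c d, hprodn⟩
  · rw [hprodn, ← hkey, Nat.mul_div_cancel_left _ (hc_pos n)]
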